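/- For all positive integers n, i(n) ≥ a(n). -/
import Mathlib


theorem stmt_9
    (i a : ℕ → ℚ)
    (ha0 : a 0 = 0) (hi1 : i 1 = 1) (ha1 : a 1 = 0)
    (ha : ∀ n : ℕ, 2 ≤ n → a n = (i (n - 1) + a (n - 1)) / 2)
    (hi23 : ∀ n : ℕ, 2 ≤ n → n ≤ 3 → i n = i (n - 1))
    (hi4 : i 4 = (i 1 + a 1 + i 2 + a 2) / 2)
    (hi5 : ∀ n : ℕ, 5 ≤ n → i n = (i 2 + a 2 + i (n - 3) + a (n - 3)) / 2) :
    ∀ n : ℕ, 1 ≤ n → i n ≥ a n := by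
  have hi2 : i 2 = 1 := by have := hi23 2 (by norm_num) (by norm_num); simpa [hi1] using this
  have ha2 : a 2 = 1/2 := by have := ha 2 (by norm_num); rw [this]; norm_num [hi1, ha1]
  have hi3 : i 3 = 1 := by have := hi23 3 (by norm_num) (by norm_num); simpa [hi2] using this
  have ha3 : a 3 = 3/4 := by have := ha 3 (by norm_num); rw [this]; norm_num [hi2, ha2]
  have hi4' : i 4 = 5/4 := by rw [hi4]; norm_num [hi1, ha1, hi2, ha2]
  have ha4 : a 4 = 7/8 := by have := ha 4 (by norm_num); rw [this]; norm_num [hi3, ha3]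
  -- key: for m ≥ 2, 0 ≤ s(m+1) - s(m) ≤ 3/4 where s n = i n + a n
  have key : ∀ m : ℕ, 2 ≤ m →
      0 ≤ i (m+1) + a (m+1) - (i m + a m) ∧ i (m+1) + a (m+1) - (i m + a m) ≤ 3/4 := by
    intro m
    induction m using Nat.strong_induction_on with
    | _ m ih =>
      intro hm
      match m, hm with
      | 2, _ => rw [hi3, ha3, hi2, ha2]; norm_num
      | 3, _ => rw [hi4', ha4, hi3, ha3]; norm_num
      | (k+4), _ =>
        have h1 := ih (k+3) (by omega) (by omega)
        have h2 := ih (k+2) (by omega) (by omega)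
        have e5 : i (k+5) = (i 2 + a 2 + i (k+2) + a (k+2)) / 2 := by
          have := hi5 (k+5) (by omega)
          have h : k+5-3 = k+2 := by omega
          rwa [h] at this
        have e5' : a (k+5) = (i (k+4) + a (k+4)) / 2 := by
          have := ha (k+5) (by omega)
          have h : k+5-1 = k+4 := by omega
          rwa [h] at this
        rw [hi2, ha2] at e5
        constructor <;> rw [e5, e5'] <;> [linarith [h1.2, h2.2]; linarith [h1.1, h2.1]]
  intro n hn
  match n, hn with
  | 1, _ => rw [hi1, ha1]; norm_num
  | 2, _ => rw [hi2, ha2]; norm_num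
  | 3, _ => rw [hi3, ha3]; norm_num
  | 4, _ => rw [hi4', ha4]; norm_num
  | (k+5), _ =>
    have h1 := key (k+3) (by omega)
    have h2 := key (k+2) (by omega)
    have e5 : i (k+5) = (i 2 + a 2 + i (k+2) + a (k+2)) / 2 := by
      have := hi5 (k+5) (by omega)
      have h : k+5-3 = k+2 := by omega
      rwa [h] at this
    have e5' : a (k+5) = (i (k+4) + a (k+4)) / 2 := by
      have := ha (k+5) (by omega)
      have h : k+5-1 = k+4 := by omega
      rwa [h] at this
    rw [hi2, ha2] at e5
    rw [ge_iff_le, e5, e5']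
    linarith [h1.2, h2.2]
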